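/- Let G be the semidirect product of the cyclic group ZMod 15 by the cyclic group ZMod 4, where the generator of ZMod 4 acts on ZMod 15 by multiplication by 2 (this group has GAP Id (60, 7)). Then there is no injective group homomorphism from G into the symmetric group S₅ on five letters. -/

import Mathlib

/-- The homomorphism `AddAut A →* MulAut (Multiplicative A)`. -/
def addAutToMulAut {A : Type} [AddGroup A] :
    Multiplicative (AddAut A) →* MulAut (Multiplicative A) where
  toFun f := AddEquiv.toMultiplicative f.toAdd
  map_one' := rfl
  map_mul' _ _ := rfl

/-- The homomorphism `Multiplicative (ZMod n) →* G` sending the generator to an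
element `g` with `g ^ n = 1`. -/
def zmodHom {n : ℕ} {G : Type} [Group G] (g : G) (hg : g ^ n = 1) :
    Multiplicative (ZMod n) →* G :=
  AddMonoidHom.toMultiplicativeLeft <|
    ZMod.lift n ⟨zmultiplesHom (Additive G) (Additive.ofMul g), by simp [← ofMul_pow, hg]⟩

/-- Multiplication by `2` as an automorphism of `ZMod 15`. -/
def mulTwo : AddAut (ZMod 15) where
  toFun x := 2 * x
  invFun x := 8 * x
  left_inv := by decide
  right_inv := by decide
  map_add' := by decide

lemma mulTwo_pow_four : (addAutToMulAut (Multiplicative.ofAdd mulTwo)) ^ 4 = 1 := by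
  have h : Multiplicative.ofAdd mulTwo ^ 4 = 1 :=
    Multiplicative.toAdd.injective (AddEquiv.ext (by decide))
  rw [← map_pow, h, map_one]

/-- The action of `ZMod 4` on `ZMod 15` with the generator acting by `x ↦ 2x`. -/
def actC4 : Multiplicative (ZMod 4) →* MulAut (Multiplicative (ZMod 15)) :=
  zmodHom (addAutToMulAut (Multiplicative.ofAdd mulTwo)) mulTwo_pow_four

set_option maxRecDepth 10000 in
/-- No permutation of `Fin 5` has order `15`. -/
lemma perm_fin5_pow15 : ∀ σ : Equiv.Perm (Fin 5), σ ^ 15 = 1 → σ ^ 5 = 1 ∨ σ ^ 3 = 1 := by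
  decide

/-- The group `ZMod 15 ⋊ ZMod 4` with the generator of `ZMod 4` acting by
multiplication by `2` (GAP Id `(60, 7)`) does not embed into `S₅`. -/
theorem gapId_60_7_not_embeds_S5 :
    ¬ ∃ f : (Multiplicative (ZMod 15) ⋊[actC4] Multiplicative (ZMod 4)) →*
        Equiv.Perm (Fin 5), Function.Injective f := by
  rintro ⟨f, hf⟩
  set g : Multiplicative (ZMod 15) ⋊[actC4] Multiplicative (ZMod 4) :=
    SemidirectProduct.inl (Multiplicative.ofAdd (1 : ZMod 15)) with hg
  have hpow : ∀ n : ℕ, g ^ n = SemidirectProduct.inl (Multiplicative.ofAdd (n : ZMod 15)) := by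
    intro n
    rw [hg, ← map_pow]
    congr 1
    rw [← ofAdd_nsmul]
    norm_num
  have h15 : g ^ 15 = 1 := by
    rw [hpow]
    have : ((15 : ℕ) : ZMod 15) = 0 := by decide
    rw [this]
    simp
  have h5 : g ^ 5 ≠ 1 := by
    rw [hpow]
    intro h
    have := SemidirectProduct.inl_injective (φ := actC4)
      (h.trans (map_one SemidirectProduct.inl).symm)
    exact absurd this (by decide)
  have h3 : g ^ 3 ≠ 1 := by
    rw [hpow]
    intro h
    have := SemidirectProduct.inl_injective (φ := actC4)
      (h.trans (map_one SemidirectProduct.inl).symm)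
    exact absurd this (by decide)
  have hf15 : (f g) ^ 15 = 1 := by rw [← map_pow, h15, map_one]
  rcases perm_fin5_pow15 (f g) hf15 with h | h
  · exact h5 (hf (by rw [map_pow, h, map_one]))
  · exact h3 (hf (by rw [map_pow, h, map_one]))
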